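/- Let A be a real nonassociative algebra with unit having a basis {1, i, w, v} satisfying table (Tp), let [x, y] = xy − yx, and write [v, w] = α·1 + β·i with α, β ∈ ℝ. If α = 0 and β = 0, then there exists a basis {z, h, x, y} of A with z = 1 such that [z, h] = [z, x] = [z, y] = 0, [x, y] = 0, [h, x] = y, and [h, y] = −x; that is, (A, [·,·]) is isomorphic to the direct sum of a one-dimensional Lie algebra and the solvable Lie algebra 𝔤_{3,5} (with parameter 0). -/

import Mathlib

/-- For a real nonassociative unital algebra `A` with basis `{1, i, w, v}` satisfying table
`(Tp)` and `[v, w] = α•1 + β•i`: if `α = 0` and `β = 0`, then there is a basis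
`{z, h, x, y}` of `A` with `z = 1`, `[z,·] = 0`, `[x, y] = 0`, `[h, x] = y`, `[h, y] = -x`;
that is, `(A, [·,·]) ≅ 𝔤₁ ⊕ 𝔤_{3,5}` (with parameter `0`). -/
theorem lie_g35_of_alpha_zero_beta_zero {A : Type*} [NonAssocRing A] [Module ℝ A]
    [SMulCommClass ℝ A A] [IsScalarTower ℝ A A]
    (B : Module.Basis (Fin 4) ℝ A) (i w v : A)
    (hB0 : B 0 = 1) (hB1 : B 1 = i) (hB2 : B 2 = w) (hB3 : B 3 = v)
    (hii : i * i = -1) (hiw : i * w = -v) (hiv : i * v = w)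
    (hwi : w * i = v) (hvi : v * i = -w)
    (hww : w * w ∈ Submodule.span ℝ ({1, i} : Set A))
    (hwv : w * v ∈ Submodule.span ℝ ({1, i} : Set A))
    (hvw : v * w ∈ Submodule.span ℝ ({1, i} : Set A))
    (hvv : v * v ∈ Submodule.span ℝ ({1, i} : Set A))
    (α β : ℝ) (hvw' : v * w - w * v = α • (1 : A) + β • i)
    (hα : α = 0) (hβ : β = 0) :
    ∃ (B' : Module.Basis (Fin 4) ℝ A) (h x y : A),
      B' 0 = 1 ∧ B' 1 = h ∧ B' 2 = x ∧ B' 3 = y ∧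
      (1 : A) * h - h * 1 = 0 ∧ (1 : A) * x - x * 1 = 0 ∧ (1 : A) * y - y * 1 = 0 ∧
      x * y - y * x = 0 ∧ h * x - x * h = y ∧ h * y - y * h = -x := by
  subst hα hβ
  rw [zero_smul, zero_smul, add_zero] at hvw'
  set u : Fin 4 → ℝˣ := ![1, Units.mk0 (-(1/2)) (by norm_num), 1, 1] with hu
  refine ⟨B.unitsSMul u, (-(1/2) : ℝ) • i, w, v, ?_, ?_, ?_, ?_, ?_, ?_, ?_, ?_, ?_, ?_⟩
  · rw [Module.Basis.unitsSMul_apply, hB0]; simp [hu]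
  · rw [Module.Basis.unitsSMul_apply, hB1]; simp [hu]
  · rw [Module.Basis.unitsSMul_apply, hB2]; simp [hu]
  · rw [Module.Basis.unitsSMul_apply, hB3]; simp [hu]
  · simp
  · simp
  · simp
  · linear_combination (norm := module) -hvw'
  · rw [smul_mul_assoc, mul_smul_comm, hiw, hwi]; module
  · rw [smul_mul_assoc, mul_smul_comm, hiv, hvi]; module
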